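/- Let G be a finite simple graph and C ⊆ V(G) a set of vertices that is not a vertex cover of G, such that there exists an edge {x_i, x_j} of G for which both C ∪ {x_i} and C ∪ {x_j} are vertex covers of G. Then the colon ideal satisfies J(G) : X_C = ⟨x_i, x_j⟩, where X_C = ∏_{x ∈ C} x. -/

import Mathlib

open MvPolynomial CategoryTheory

noncomputable section

/-- A set of vertices is a vertex cover if it meets every edge. -/
def IsVertexCover {V : Type} (G : SimpleGraph V) (C : Set V) : Prop :=
  ∀ ⦃u v : V⦄, G.Adj u v → u ∈ C ∨ v ∈ C

/-- A vertex cover minimal with respect to inclusion. -/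
def IsMinimalVertexCover {V : Type} (G : SimpleGraph V) (C : Set V) : Prop :=
  IsVertexCover G C ∧ ∀ C' ⊆ C, IsVertexCover G C' → C' = C

/-- `α₀(G)`: the minimum cardinality of a vertex cover of `G`. -/
def coverNumber {V : Type} (G : SimpleGraph V) : ℕ :=
  sInf {k | ∃ C : Set V, IsVertexCover G C ∧ C.ncard = k}

/-- `bight(I(G))`: the maximum cardinality of a minimal vertex cover of `G`. -/
def bigHeight {V : Type} (G : SimpleGraph V) : ℕ :=
  sSup {k | ∃ C : Set V, IsMinimalVertexCover G C ∧ C.ncard = k}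

/-- The edge ideal `I(G) ⊆ K[x_v : v ∈ V]`, generated by the monomials
`x_u * x_v` over the edges `{u,v}` of `G`. -/
def edgeIdeal (K : Type) [Field K] {V : Type} (G : SimpleGraph V) :
    Ideal (MvPolynomial V K) :=
  Ideal.span {m | ∃ u v : V, G.Adj u v ∧ m = X u * X v}

/-- The cover ideal `J(G) = ⋂_{{u,v} ∈ E(G)} ⟨x_u, x_v⟩`. -/
def coverIdeal (K : Type) [Field K] {V : Type} (G : SimpleGraph V) :
    Ideal (MvPolynomial V K) :=
  ⨅ (u : V) (v : V) (_ : G.Adj u v), Ideal.span {X u, X v}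

/-- The v-number of a graded ideal `I`: the least `d ≥ 0` such that there is a
homogeneous polynomial `f` of degree `d` with `I : f` a prime ideal. -/
def vNumber {K : Type} [Field K] {V : Type} (I : Ideal (MvPolynomial V K)) : ℕ :=
  sInf {d | ∃ f : MvPolynomial V K, f.IsHomogeneous d ∧
    (I.colon (Ideal.span {f})).IsPrime}

/-- The homogeneous maximal ideal `⟨x_1, …, x_n⟩` of the polynomial ring. -/
def maxIdeal (K : Type) [Field K] (V : Type) : Ideal (MvPolynomial V K) :=
  Ideal.span (Set.range (X : V → MvPolynomial V K))

/-- The depth of the module `M` with respect to the ideal `J`: the supremum of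
the lengths of regular sequences on `M` consisting of elements of `J`. -/
def mdepth {R : Type} [CommRing R] (J : Ideal R) (M : Type) [AddCommGroup M]
    [Module R M] : ℕ :=
  sSup {k | ∃ rs : List R, rs.length = k ∧ (∀ r ∈ rs, r ∈ J) ∧
    RingTheory.Sequence.IsRegular M rs}

/-- The projective dimension of an `R`-module `M`, characterized by the
vanishing of `Ext^i(M, N)` for all `i > d` and all modules `N`. -/
def projDim (R : Type) [CommRing R] (M : ModuleCat.{0} R) : ℕ :=
  sInf {d : ℕ | ∀ (N : ModuleCat.{0} R) (i : ℕ), d < i →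
    Subsingleton (((Ext R (ModuleCat.{0} R) i).obj (Opposite.op M)).obj N)}


/-- Substitution killing `X i` and `X j`. -/
def killTwo {K : Type} [Field K] {V : Type} [DecidableEq V] (i j : V) :
    MvPolynomial V K →ₐ[K] MvPolynomial V K :=
  aeval (fun x => if x = i ∨ x = j then 0 else X x)

lemma mem_span_pair_iff_killTwo {K : Type} [Field K] {V : Type} [DecidableEq V]
    (i j : V) (f : MvPolynomial V K) :
    f ∈ Ideal.span ({X i, X j} : Set (MvPolynomial V K)) ↔ killTwo i j f = 0 := by
  constructor
  · intro hf
    obtain ⟨a, b, hab⟩ := Ideal.mem_span_pair.mp hf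
    have : killTwo i j (a * X i + b * X j) = 0 := by
      simp [killTwo]
    rwa [hab] at this
  · intro hf
    set I : Ideal (MvPolynomial V K) := Ideal.span ({X i, X j} : Set (MvPolynomial V K))
    have hXi : (X i : MvPolynomial V K) ∈ I := Ideal.subset_span (by simp)
    have hXj : (X j : MvPolynomial V K) ∈ I := Ideal.subset_span (by simp)
    have key : (Ideal.Quotient.mkₐ K I).comp (killTwo i j) = Ideal.Quotient.mkₐ K I := by
      apply MvPolynomial.algHom_ext
      intro x
      by_cases hx : x = i ∨ x = j
      · have hXx : (X x : MvPolynomial V K) ∈ I := by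
          rcases hx with h | h <;> subst h <;> assumption
        simp [killTwo, hx, (Ideal.Quotient.eq_zero_iff_mem).mpr hXx]
      · simp [killTwo, hx]
    have := congrArg (fun g => g f) key
    simp only [AlgHom.comp_apply] at this
    rw [hf] at this
    simp only [map_zero, Ideal.Quotient.mkₐ_eq_mk] at this
    exact (Ideal.Quotient.eq_zero_iff_mem).mp this.symm

lemma isPrime_span_pair {K : Type} [Field K] {V : Type} [DecidableEq V] (i j : V) :
    (Ideal.span ({X i, X j} : Set (MvPolynomial V K))).IsPrime := by
  constructor
  · intro h
    have h1 : (1 : MvPolynomial V K) ∈ Ideal.span ({X i, X j} : Set (MvPolynomial V K)) := by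
      rw [h]; trivial
    rw [mem_span_pair_iff_killTwo] at h1
    simp at h1
  · intro f g hfg
    rw [mem_span_pair_iff_killTwo] at hfg ⊢
    rw [mem_span_pair_iff_killTwo (K := K) i j g]
    rw [map_mul] at hfg
    exact mul_eq_zero.mp hfg

/-- If `C` is not a vertex cover of `G` but there is an edge `{x_i, x_j}` with
both `C ∪ {x_i}` and `C ∪ {x_j}` vertex covers, then `J(G) : X_C = ⟨x_i, x_j⟩`. -/
theorem coverIdeal_colon_eq_span_pair
    {K : Type} [Field K] {n : ℕ} (hn : 1 ≤ n) (G : SimpleGraph (Fin n))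
    (hE : G.edgeSet.Nonempty) (C : Finset (Fin n))
    (hC : ¬ IsVertexCover G (↑C : Set (Fin n)))
    (i j : Fin n) (hij : G.Adj i j)
    (hCi : IsVertexCover G ((↑C : Set (Fin n)) ∪ {i}))
    (hCj : IsVertexCover G ((↑C : Set (Fin n)) ∪ {j})) :
    (coverIdeal K G).colon (Ideal.span {∏ x ∈ C, X x} : Ideal (MvPolynomial (Fin n) K)) =
      Ideal.span {X i, X j} := by
  classical
  -- the edge not covered by C is exactly {i, j}
  rw [IsVertexCover] at hC
  push_neg at hC
  obtain ⟨u, v, huv, hu, hv⟩ := hC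
  have hune : u ≠ v := huv.ne
  have hui : u = i ∨ v = i := by
    rcases hCi huv with h | h
    · rcases h with h | h
      · exact absurd h hu
      · exact Or.inl h
    · rcases h with h | h
      · exact absurd h hv
      · exact Or.inr h
  have huj : u = j ∨ v = j := by
    rcases hCj huv with h | h
    · rcases h with h | h
      · exact absurd h hu
      · exact Or.inl h
    · rcases h with h | h
      · exact absurd h hv
      · exact Or.inr h
  have hiC : i ∉ C ∧ j ∉ C := by
    rcases hui with h1 | h1 <;> rcases huj with h2 | h2
    · exact absurd (h1.symm.trans h2) hij.ne
    · exact ⟨h1 ▸ hu, h2 ▸ hv⟩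
    · exact ⟨h1 ▸ hv, h2 ▸ hu⟩
    · exact absurd (h1.symm.trans h2) hij.ne
  have hP : (Ideal.span ({X i, X j} : Set (MvPolynomial (Fin n) K))).IsPrime :=
    isPrime_span_pair i j
  have hXC : (∏ x ∈ C, X x : MvPolynomial (Fin n) K) ∉
      Ideal.span ({X i, X j} : Set (MvPolynomial (Fin n) K)) := by
    rw [mem_span_pair_iff_killTwo, map_prod]
    have : ∀ x ∈ C, killTwo i j (X x : MvPolynomial (Fin n) K) = X x := by
      intro x hx
      have : ¬ (x = i ∨ x = j) := by
        rintro (rfl | rfl)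
        · exact hiC.1 hx
        · exact hiC.2 hx
      simp [killTwo, this]
    rw [Finset.prod_congr rfl this]
    exact Finset.prod_ne_zero_iff.mpr (fun x _ => X_ne_zero x)
  apply le_antisymm
  · intro f hf
    rw [Ideal.mem_colon_span_singleton] at hf
    have hmem : f * ∏ x ∈ C, X x ∈
        Ideal.span ({X i, X j} : Set (MvPolynomial (Fin n) K)) := by
      have := hf
      rw [coverIdeal] at this
      simp only [Ideal.mem_iInf] at this
      exact this i j hij
    rcases hP.mem_or_mem hmem with h | h
    · exact h
    · exact absurd h hXC
  · -- span {X i, X j} ⊆ colon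
    rw [Ideal.span_le]
    have key : ∀ w : Fin n, IsVertexCover G ((↑C : Set (Fin n)) ∪ {w}) →
        (X w : MvPolynomial (Fin n) K) ∈
          (coverIdeal K G).colon (Ideal.span {∏ x ∈ C, X x} : Ideal (MvPolynomial (Fin n) K)) := by
      intro w hw
      rw [Ideal.mem_colon_span_singleton, coverIdeal]
      simp only [Ideal.mem_iInf]
      intro a b hab
      have hd : (X a : MvPolynomial (Fin n) K) ∣ X w * ∏ x ∈ C, X x ∨
          (X b : MvPolynomial (Fin n) K) ∣ X w * ∏ x ∈ C, X x := by
        rcases hw hab with h | h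
        · left
          rcases h with h | h
          · exact Dvd.dvd.mul_left (Finset.dvd_prod_of_mem _ h) _
          · rw [Set.mem_singleton_iff] at h
            exact h ▸ Dvd.dvd.mul_right dvd_rfl _
        · right
          rcases h with h | h
          · exact Dvd.dvd.mul_left (Finset.dvd_prod_of_mem _ h) _
          · rw [Set.mem_singleton_iff] at h
            exact h ▸ Dvd.dvd.mul_right dvd_rfl _
      rcases hd with h | h
      · exact Ideal.span_mono (Set.singleton_subset_iff.mpr (by simp))
          (Ideal.mem_span_singleton.mpr h)
      · exact Ideal.span_mono (Set.singleton_subset_iff.mpr (by simp))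
          (Ideal.mem_span_singleton.mpr h)
    rintro f (rfl | rfl)
    · exact key i hCi
    · exact key j hCj


end
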